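/- arXiv:2008.12133 — 2 statements merged into one kernel-verified Lean document; each statement's English description precedes it below -/
import Mathlib

section
/- (Osgood lemma) Let $t_0 > 0$, let $\rho : [0, t_0] \to (0, \infty)$ be a positive Borel function, $\gamma : [0,t_0] \to [0,\infty)$ locally integrable, and $\mu : (0,\infty) \to (0,\infty)$ continuous and increasing. Assume that for some $\alpha > 0$ and all $t \in [0, t_0]$: $\rho(t) \le \alpha + \int_t^{t_0} \gamma(s) \mu(\rho(s)) ds$. Define $\mathfrak{M}(x) = \int_x^1 \frac{ds}{\mu(s)}$. Then for all $t \in [0,t_0]$: $-\mathfrak{M}(\rho(t)) + \mathfrak{M}(\alpha) \le \int_t^{t_0} \gamma(s) ds$. -/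
open MeasureTheory intervalIntegral

/-- backward-in-time Osgood lemma. -/
theorem stmt_3 (t₀ : ℝ) (ht₀ : 0 < t₀)
    (ρ γ : ℝ → ℝ) (μ : ℝ → ℝ)
    (hρ_meas : Measurable ρ)
    (hρ_pos : ∀ t ∈ Set.Icc (0 : ℝ) t₀, 0 < ρ t)
    (hγ_nonneg : ∀ t ∈ Set.Icc (0 : ℝ) t₀, 0 ≤ γ t)
    (hγ_int : IntegrableOn γ (Set.Icc 0 t₀))
    (hμ_pos : ∀ x > (0 : ℝ), 0 < μ x)
    (hμ_cont : ContinuousOn μ (Set.Ioi 0))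
    (hμ_mono : StrictMonoOn μ (Set.Ioi 0))
    (α : ℝ) (hα : 0 < α)
    (hineq : ∀ t ∈ Set.Icc (0 : ℝ) t₀,
      ρ t ≤ α + ∫ s in t..t₀, γ s * μ (ρ s)) :
    ∀ t ∈ Set.Icc (0 : ℝ) t₀,
      -(∫ s in (ρ t)..1, 1 / μ s) + (∫ s in α..1, 1 / μ s) ≤ ∫ s in t..t₀, γ s := by
  have hμmono : MonotoneOn μ (Set.Ioi 0) := hμ_mono.monotoneOn
  have hinv_cont : ContinuousOn (fun x => 1 / μ x) (Set.Ioi (0:ℝ)) :=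
    continuousOn_const.div hμ_cont (fun x hx => (hμ_pos x hx).ne')
  have hinv_ii : ∀ a b : ℝ, 0 < a → 0 < b →
      IntervalIntegrable (fun x => 1 / μ x) volume a b := by
    intro a b ha hb
    apply ContinuousOn.intervalIntegrable
    apply hinv_cont.mono
    intro x hx
    exact lt_of_lt_of_le (lt_min ha hb) hx.1
  have hinv_nn : ∀ x : ℝ, 0 < x → 0 ≤ 1 / μ x := fun x hx =>
    (one_div_pos.mpr (hμ_pos x hx)).le
  intro t ht
  have ht0 : (0:ℝ) ≤ t := ht.1
  have htt0 : t ≤ t₀ := ht.2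
  have hρt : 0 < ρ t := hρ_pos t ht
  have hγii : ∀ a b : ℝ, a ∈ Set.Icc (0:ℝ) t₀ → b ∈ Set.Icc (0:ℝ) t₀ →
      IntervalIntegrable γ volume a b := by
    intro a b ha hb
    exact (hγ_int.mono_set (Set.uIcc_subset_Icc ha hb)).intervalIntegrable
  have hγI : (0:ℝ) ≤ ∫ s in t..t₀, γ s :=
    intervalIntegral.integral_nonneg htt0 (fun u hu => hγ_nonneg u ⟨ht0.trans hu.1, hu.2⟩)
  -- rewrite the left-hand side
  have e2 : -(∫ s in (ρ t)..1, 1 / μ s) + (∫ s in α..1, 1 / μ s)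
      = ∫ s in α..(ρ t), 1 / μ s := by
    have e1 : (∫ s in α..(1:ℝ), 1 / μ s) + (∫ s in (1:ℝ)..(ρ t), 1 / μ s)
        = ∫ s in α..(ρ t), 1 / μ s :=
      intervalIntegral.integral_add_adjacent_intervals
        (hinv_ii α 1 hα one_pos) (hinv_ii 1 (ρ t) one_pos hρt)
    rw [← e1, intervalIntegral.integral_symm (ρ t) 1]
    ring
  rw [e2]
  set f : ℝ → ℝ := fun s => γ s * μ (ρ s) with hfdef
  by_cases hInt : IntervalIntegrable f volume t t₀
  swap
  · -- trivial case: the integral is zero, hence ρ t ≤ α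
    have h0 : (∫ s in t..t₀, f s) = 0 := intervalIntegral.integral_undef hInt
    have hρα : ρ t ≤ α := by
      have h1 := hineq t ht
      rw [h0] at h1
      linarith
    have h2 : (0:ℝ) ≤ ∫ s in (ρ t)..α, 1 / μ s :=
      intervalIntegral.integral_nonneg hρα (fun u hu => hinv_nn u (lt_of_lt_of_le hρt hu.1))
    rw [intervalIntegral.integral_symm]
    linarith
  -- main case
  have hIcc : Set.uIcc t t₀ = Set.Icc t t₀ := Set.uIcc_of_le htt0
  have ht₀mem : t₀ ∈ Set.Icc t t₀ := ⟨htt0, le_rfl⟩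
  have htmem : t ∈ Set.Icc t t₀ := ⟨le_rfl, htt0⟩
  have hmem : ∀ s ∈ Set.Icc t t₀, s ∈ Set.Icc (0:ℝ) t₀ := fun s hs => ⟨ht0.trans hs.1, hs.2⟩
  have hfii : ∀ a b : ℝ, a ∈ Set.Icc t t₀ → b ∈ Set.Icc t t₀ →
      IntervalIntegrable f volume a b := by
    intro a b ha hb
    exact hInt.mono_set (by rw [hIcc]; exact Set.uIcc_subset_Icc ha hb)
  have hfnn : ∀ u ∈ Set.Icc (0:ℝ) t₀, 0 ≤ f u := fun u hu =>
    mul_nonneg (hγ_nonneg u hu) (hμ_pos _ (hρ_pos u hu)).le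
  set R : ℝ → ℝ := fun s => α + ∫ u in s..t₀, f u with hRdef
  have hRdiff : ∀ a b : ℝ, a ∈ Set.Icc t t₀ → b ∈ Set.Icc t t₀ →
      R a - R b = ∫ u in a..b, f u := by
    intro a b ha hb
    have h := intervalIntegral.integral_add_adjacent_intervals
      (hfii a b ha hb) (hfii b t₀ hb ht₀mem)
    simp only [hRdef]
    linarith
  have hRanti : ∀ a b : ℝ, a ∈ Set.Icc t t₀ → b ∈ Set.Icc t t₀ → a ≤ b → R b ≤ R a := by
    intro a b ha hb hab
    have h := hRdiff a b ha hb
    have h2 : (0:ℝ) ≤ ∫ u in a..b, f u :=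
      intervalIntegral.integral_nonneg hab
        (fun u hu => hfnn u ⟨ht0.trans (ha.1.trans hu.1), hu.2.trans hb.2⟩)
    linarith
  have hRt₀ : R t₀ = α := by simp [hRdef]
  have hαR : ∀ s ∈ Set.Icc t t₀, α ≤ R s := by
    intro s hs
    have := hRanti s t₀ hs ht₀mem hs.2
    rwa [hRt₀] at this
  have hRpos : ∀ s ∈ Set.Icc t t₀, 0 < R s := fun s hs => lt_of_lt_of_le hα (hαR s hs)
  have hρR : ∀ s ∈ Set.Icc t t₀, ρ s ≤ R s := fun s hs => hineq s (hmem s hs)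
  have hRle : ∀ s ∈ Set.Icc t t₀, R s ≤ R t := fun s hs => hRanti t s htmem hs hs.1
  set M : ℝ → ℝ := fun x => ∫ u in α..x, 1 / μ u with hMdef
  -- key estimate
  have key : ∀ a b : ℝ, a ∈ Set.Icc t t₀ → b ∈ Set.Icc t t₀ → a ≤ b →
      M (R a) ≤ M (R b) + (μ (R a) / μ (R b)) * ∫ u in a..b, γ u := by
    intro a b ha hb hab
    have hRba : R b ≤ R a := hRanti a b ha hb hab
    have hRbpos : 0 < R b := hRpos b hb
    have hRapos : 0 < R a := hRpos a ha
    have hμRb : 0 < μ (R b) := hμ_pos _ hRbpos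
    have h1 : M (R a) - M (R b) = ∫ x in (R b)..(R a), 1 / μ x :=
      intervalIntegral.integral_interval_sub_left
        (hinv_ii α (R a) hα hRapos) (hinv_ii α (R b) hα hRbpos)
    have h2 : (∫ x in (R b)..(R a), 1 / μ x) ≤ (R a - R b) * (1 / μ (R b)) := by
      have hpt : ∀ x ∈ Set.Icc (R b) (R a), 1 / μ x ≤ 1 / μ (R b) := by
        intro x hx
        exact one_div_le_one_div_of_le hμRb
          (hμmono (Set.mem_Ioi.mpr hRbpos)
            (Set.mem_Ioi.mpr (lt_of_lt_of_le hRbpos hx.1)) hx.1)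
      have := intervalIntegral.integral_mono_on hRba
        (hinv_ii (R b) (R a) hRbpos hRapos) intervalIntegrable_const hpt
      simpa [intervalIntegral.integral_const, smul_eq_mul] using this
    have h3 : R a - R b = ∫ u in a..b, f u := hRdiff a b ha hb
    have h4 : (∫ u in a..b, f u) ≤ μ (R a) * ∫ u in a..b, γ u := by
      have hpt : ∀ u ∈ Set.Icc a b, f u ≤ μ (R a) * γ u := by
        intro u hu
        have hu' : u ∈ Set.Icc t t₀ := ⟨ha.1.trans hu.1, hu.2.trans hb.2⟩
        have hu'' := hmem u hu'
        have h5 : μ (ρ u) ≤ μ (R u) :=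
          hμmono (Set.mem_Ioi.mpr (hρ_pos u hu'')) (Set.mem_Ioi.mpr (hRpos u hu'))
            (hρR u hu')
        have h6 : μ (R u) ≤ μ (R a) :=
          hμmono (Set.mem_Ioi.mpr (hRpos u hu')) (Set.mem_Ioi.mpr hRapos)
            (hRanti a u ha hu' hu.1)
        calc f u = γ u * μ (ρ u) := rfl
          _ ≤ γ u * μ (R a) := mul_le_mul_of_nonneg_left (h5.trans h6) (hγ_nonneg u hu'')
          _ = μ (R a) * γ u := mul_comm _ _
      have := intervalIntegral.integral_mono_on hab (hfii a b ha hb)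
        ((hγii a b (hmem a ha) (hmem b hb)).const_mul _) hpt
      rwa [intervalIntegral.integral_const_mul] at this
    have h5 : (R a - R b) * (1 / μ (R b))
        ≤ (μ (R a) * ∫ u in a..b, γ u) * (1 / μ (R b)) := by
      apply mul_le_mul_of_nonneg_right _ (by positivity)
      rw [h3]; exact h4
    have h6 : (μ (R a) * ∫ u in a..b, γ u) * (1 / μ (R b))
        = (μ (R a) / μ (R b)) * ∫ u in a..b, γ u := by ring
    linarith
  -- continuity facts
  have hRcont : ContinuousOn R (Set.Icc t t₀) := by
    have h := intervalIntegral.continuousOn_primitive_interval_left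
      (f := f) (a := t) (b := t₀) (μ := volume) ((intervalIntegrable_iff').mp hInt)
    rw [hIcc] at h
    exact continuousOn_const.add h
  have hMcont : ContinuousOn M (Set.Icc α (R t)) := by
    have h := intervalIntegral.continuousOn_primitive_interval
      (f := fun x => 1 / μ x) (a := α) (b := R t) (μ := volume)
      ((intervalIntegrable_iff').mp (hinv_ii α (R t) hα (hRpos t htmem)))
    rwa [Set.uIcc_of_le (hαR t htmem)] at h
  have hμRcont : ContinuousOn (fun s => μ (R s)) (Set.Icc t t₀) :=
    hμ_cont.comp hRcont (fun s hs => Set.mem_Ioi.mpr (hRpos s hs))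
  have hMRcont : ContinuousOn (fun s => M (R s)) (Set.Icc t t₀) :=
    hMcont.comp hRcont (fun s hs => ⟨hαR s hs, hRle s hs⟩)
  have hγprim : ContinuousOn (fun s => ∫ u in s..t₀, γ u) (Set.Icc t t₀) := by
    have h := intervalIntegral.continuousOn_primitive_interval_left
      (f := γ) (a := t) (b := t₀) (μ := volume)
      ((intervalIntegrable_iff').mp (hγii t t₀ ht ⟨ht₀.le, le_rfl⟩))
    rwa [hIcc] at h
  -- the bootstrap claim
  have claim : ∀ L : ℝ, 1 < L → M (R t) ≤ L * ∫ u in t..t₀, γ u := by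
    intro L hL
    set A : Set ℝ := Set.Icc t t₀ ∩
      {s | M (R s) - L * (∫ u in s..t₀, γ u) ≤ 0} with hAdef
    have hAne : A.Nonempty := by
      refine ⟨t₀, ht₀mem, ?_⟩
      simp [Set.mem_setOf_eq, hRt₀, hMdef, intervalIntegral.integral_same]
    have hAbdd : BddBelow A := ⟨t, fun s hs => hs.1.1⟩
    have hAclosed : IsClosed A := by
      apply ContinuousOn.preimage_isClosed_of_isClosed
        ((hMRcont.sub (hγprim.const_smul L)) : ContinuousOn _ _) isClosed_Icc isClosed_Iic
    have hcA : sInf A ∈ A := hAclosed.csInf_mem hAne hAbdd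
    set c := sInf A with hcdef
    have hc : c ∈ Set.Icc t t₀ := hcA.1
    have hcP : M (R c) ≤ L * ∫ u in c..t₀, γ u := by
      have := hcA.2
      simp only [Set.mem_setOf_eq] at this
      linarith
    by_cases hct : c ≤ t
    · have hceq : c = t := le_antisymm hct hc.1
      rw [hceq] at hcP
      exact hcP
    · exfalso
      push_neg at hct
      have hμRc : 0 < μ (R c) := hμ_pos _ (hRpos c hc)
      have hlt : μ (R c) < L * μ (R c) := (lt_mul_iff_one_lt_left hμRc).mpr hL
      have hev : {s : ℝ | μ (R s) < L * μ (R c)} ∈ nhdsWithin c (Set.Icc t t₀) :=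
        hμRcont c hc (Iio_mem_nhds hlt)
      obtain ⟨δ, hδpos, hδ⟩ := Metric.mem_nhdsWithin_iff.mp hev
      set s := max t (c - δ / 2) with hsdef
      have hst : t ≤ s := le_max_left _ _
      have hsc : s < c := max_lt hct (by linarith)
      have hs : s ∈ Set.Icc t t₀ := ⟨hst, hsc.le.trans hc.2⟩
      have hsball : s ∈ Metric.ball c δ := by
        rw [Metric.mem_ball, Real.dist_eq, abs_of_nonpos (by linarith)]
        have : c - δ / 2 ≤ s := le_max_right _ _
        linarith
      have hμsb : μ (R s) < L * μ (R c) := hδ ⟨hsball, hs⟩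
      have hk := key s c hs hc hsc.le
      have hγsc : (0:ℝ) ≤ ∫ u in s..c, γ u :=
        intervalIntegral.integral_nonneg hsc.le
          (fun u hu => hγ_nonneg u ⟨ht0.trans (hst.trans hu.1), hu.2.trans hc.2⟩)
      have hfrac : (μ (R s) / μ (R c)) * (∫ u in s..c, γ u)
          ≤ L * ∫ u in s..c, γ u := by
        apply mul_le_mul_of_nonneg_right _ hγsc
        rw [div_le_iff₀ hμRc]
        nlinarith [hμ_pos (R s) (hRpos s hs)]
      have hsplit : (∫ u in s..t₀, γ u) = (∫ u in s..c, γ u) + ∫ u in c..t₀, γ u :=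
        (intervalIntegral.integral_add_adjacent_intervals
          (hγii s c (hmem s hs) (hmem c hc)) (hγii c t₀ (hmem c hc) ⟨ht₀.le, le_rfl⟩)).symm
      have hsA : s ∈ A := by
        refine ⟨hs, ?_⟩
        simp only [Set.mem_setOf_eq]
        rw [hsplit]
        linarith
      have := csInf_le hAbdd hsA
      rw [← hcdef] at this
      exact absurd this (not_le.mpr hsc)
  -- pass to the limit L → 1⁺
  have hlim : M (R t) ≤ ∫ u in t..t₀, γ u := by
    have htends : Filter.Tendsto (fun L : ℝ => L * ∫ u in t..t₀, γ u)
        (nhdsWithin 1 (Set.Ioi 1)) (nhds (∫ u in t..t₀, γ u)) := by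
      have h1 : Filter.Tendsto (fun L : ℝ => L * ∫ u in t..t₀, γ u)
          (nhds 1) (nhds (1 * ∫ u in t..t₀, γ u)) :=
        (continuous_mul_right _).tendsto 1
      rw [one_mul] at h1
      exact h1.mono_left nhdsWithin_le_nhds
    exact ge_of_tendsto htends (eventually_nhdsWithin_of_forall fun L hL => claim L hL)
  -- M is monotone between ρ t and R t
  have hmono : M (ρ t) ≤ M (R t) := by
    have h := intervalIntegral.integral_interval_sub_left
      (hinv_ii α (R t) hα (hRpos t htmem)) (hinv_ii α (ρ t) hα hρt)
    have hnn : (0:ℝ) ≤ ∫ x in (ρ t)..(R t), 1 / μ x :=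
      intervalIntegral.integral_nonneg (hρR t htmem)
        (fun x hx => hinv_nn x (lt_of_lt_of_le hρt hx.1))
    simp only [hMdef]
    linarith
  exact hmono.trans hlim
end

section
/- Apply the Osgood lemma with $\mu(x) = x(2 - \ln x)$: if $y : [s,t] \to (0,1)$ satisfies $y(\tau) \le \delta + C \int_\tau^t (2 - \ln y(\sigma)) y(\sigma) d\sigma$ for all $\tau \in [s,t]$, with $0 < \delta < 1$ and $C > 0$, then $y(s) \le \exp\left(2 - 2 e^{-C(t-s)}\right) \delta^{e^{-C(t-s)}}$. -/
open MeasureTheory intervalIntegral Real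

private lemma mu_mono : MonotoneOn (fun x : ℝ => (2 - Real.log x) * x) (Set.Ioc 0 1) := by
  have : StrictMonoOn (fun x : ℝ => (2 - Real.log x) * x) (Set.Ioc 0 1) := by
    apply strictMonoOn_of_deriv_pos (convex_Ioc 0 1)
    · apply ContinuousOn.mul _ continuousOn_id
      exact continuousOn_const.sub (Real.continuousOn_log.mono (fun x hx => ne_of_gt hx.1))
    · intro x hx
      rw [interior_Ioc] at hx
      have hx0 : (0:ℝ) < x := hx.1
      have hd : HasDerivAt (fun x : ℝ => (2 - Real.log x) * x) (1 - Real.log x) x := by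
        have := ((hasDerivAt_const x (2:ℝ)).sub (Real.hasDerivAt_log hx0.ne')).mul
          (hasDerivAt_id x)
        convert this using 1
        · rfl
        · rfl
        · rfl
        simp only [id, Pi.sub_apply]
        linear_combination (inv_mul_cancel₀ hx0.ne')
      rw [hd.deriv]
      have : Real.log x < 0 := Real.log_neg hx0 hx.2
      linarith
  exact this.monotoneOn

private lemma mu_bound {x : ℝ} (hx0 : 0 < x) (hx1 : x < 1) :
    0 ≤ (2 - Real.log x) * x ∧ (2 - Real.log x) * x ≤ 2 := by
  have hlogneg : Real.log x < 0 := Real.log_neg hx0 hx1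
  constructor
  · exact mul_nonneg (by linarith) hx0.le
  · have h1 : Real.log x⁻¹ ≤ x⁻¹ - 1 := Real.log_le_sub_one_of_pos (by positivity)
    rw [Real.log_inv] at h1
    have hinv : x * x⁻¹ = 1 := mul_inv_cancel₀ hx0.ne'
    nlinarith

/-- Osgood lemma with modulus `μ(x) = x(2 - ln x)`. -/
theorem stmt_4 (s t : ℝ) (hst : s ≤ t) (y : ℝ → ℝ) (hy_meas : Measurable y)
    (hy : ∀ τ ∈ Set.Icc s t, 0 < y τ ∧ y τ < 1)
    (δ C : ℝ) (hδ : δ ∈ Set.Ioo (0 : ℝ) 1) (hC : 0 < C)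
    (hineq : ∀ τ ∈ Set.Icc s t,
      y τ ≤ δ + C * ∫ σ in τ..t, (2 - Real.log (y σ)) * y σ) :
    y s ≤ Real.exp (2 - 2 * Real.exp (-C * (t - s))) * δ ^ Real.exp (-C * (t - s)) := by
  obtain ⟨hδ0, hδ1⟩ := hδ
  have hs_mem : s ∈ Set.Icc s t := ⟨le_refl s, hst⟩
  set g : ℝ → ℝ := fun σ => (2 - Real.log (y σ)) * y σ with hg_def
  have hg_meas : Measurable g :=
    ((measurable_const.sub (Real.measurable_log.comp hy_meas)).mul hy_meas)
  -- integrability of g on [s,t]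
  have hg_intOn : IntegrableOn g (Set.Icc s t) := by
    apply Measure.integrableOn_of_bounded (M := 2)
      (by simp [Real.volume_Icc]) hg_meas.aestronglyMeasurable
    filter_upwards [ae_restrict_mem measurableSet_Icc] with σ hσ
    obtain ⟨h0, h2⟩ := mu_bound (hy σ hσ).1 (hy σ hσ).2
    rw [Real.norm_eq_abs, abs_of_nonneg h0]
    exact h2
  have hg_int : ∀ u ∈ Set.Icc s t, ∀ v ∈ Set.Icc s t, IntervalIntegrable g volume u v :=
    fun u hu v hv => (hg_intOn.mono_set (Set.uIcc_subset_Icc hu hv)).intervalIntegrable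
  set h : ℝ → ℝ := fun τ => δ + C * ∫ σ in τ..t, g σ with hh_def
  have hh_cont : ContinuousOn h (Set.Icc s t) := by
    have : ContinuousOn (fun τ => ∫ σ in τ..t, g σ) (Set.Icc s t) := by
      have := continuousOn_primitive_interval_left (f := g) (a := s) (b := t) (μ := volume)
        (by rwa [Set.uIcc_of_le hst])
      rwa [Set.uIcc_of_le hst] at this
    exact continuousOn_const.add (continuousOn_const.mul this)
  have hh_t : h t = δ := by simp [hh_def]
  have hyh : ∀ τ ∈ Set.Icc s t, y τ ≤ h τ := hineq
  -- key : for suitable ε, y s < φ ε s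
  have key : ∀ ε : ℝ, 0 < ε → δ + ε < 1 →
      Real.exp (2 - (2 - Real.log (δ + ε)) * Real.exp (C * (s - t))) ≤ 1 →
      y s ≤ Real.exp (2 - (2 - Real.log (δ + ε)) * Real.exp (C * (s - t))) := by
    intro ε hε hδε hφs1
    set K : ℝ := 2 - Real.log (δ + ε) with hK_def
    have hδε0 : (0:ℝ) < δ + ε := by linarith
    have hK_pos : 0 < K := by
      have : Real.log (δ + ε) < 0 := Real.log_neg hδε0 hδε
      simp only [hK_def]; linarith
    set φ : ℝ → ℝ := fun τ => Real.exp (2 - K * Real.exp (C * (τ - t))) with hφ_def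
    have hφ_pos : ∀ τ, 0 < φ τ := fun τ => Real.exp_pos _
    have hφ_anti : ∀ ⦃u v : ℝ⦄, u ≤ v → φ v ≤ φ u := by
      intro u v huv
      apply Real.exp_le_exp.2
      have : Real.exp (C * (u - t)) ≤ Real.exp (C * (v - t)) := by
        apply Real.exp_le_exp.2; nlinarith
      nlinarith
    have hφ_t : φ t = δ + ε := by
      simp [hφ_def, hK_def, Real.exp_log hδε0]
    have hφ_le_one : ∀ τ ∈ Set.Icc s t, φ τ ≤ 1 := fun τ hτ => (hφ_anti hτ.1).trans hφs1
    have hφ_cont : Continuous φ := by fun_prop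
    have hlogφ : ∀ σ, Real.log (φ σ) = 2 - K * Real.exp (C * (σ - t)) :=
      fun σ => Real.log_exp _
    set m : ℝ → ℝ := fun σ => (2 - Real.log (φ σ)) * φ σ with hm_def
    have hm_eq : ∀ σ, m σ = (K * Real.exp (C * (σ - t))) * φ σ := by
      intro σ; simp only [hm_def, hlogφ]; ring
    have hm_cont : Continuous m := by
      have : Continuous (fun σ => (K * Real.exp (C * (σ - t))) * φ σ) := by fun_prop
      exact (funext hm_eq : m = _) ▸ this
    -- φ solves the ODE
    have hφ_deriv : ∀ σ : ℝ, HasDerivAt φ (-(C * m σ)) σ := by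
      intro σ
      have h1 : HasDerivAt (fun τ : ℝ => C * (τ - t)) C σ := by
        simpa using ((hasDerivAt_id σ).sub_const t).const_mul C
      have h2 := (hasDerivAt_const σ (2:ℝ)).sub ((h1.exp).const_mul K)
      have h3 := h2.exp
      convert h3 using 1
      · rfl
      rw [hm_eq]
      simp only [hφ_def]
      simp only [Pi.sub_apply]
      ring
    have hFTC : ∀ u : ℝ, C * ∫ σ in u..t, m σ = φ u - (δ + ε) := by
      intro u
      have := intervalIntegral.integral_eq_sub_of_hasDerivAt
        (f := φ) (f' := fun σ => -(C * m σ)) (a := u) (b := t)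
        (fun x _ => hφ_deriv x) ((continuous_const.mul hm_cont).neg.intervalIntegrable u t)
      rw [intervalIntegral.integral_neg, intervalIntegral.integral_const_mul] at this
      rw [hφ_t] at this
      linarith
    -- main comparison
    have main : ∀ τ ∈ Set.Icc s t, h τ < φ τ := by
      by_contra hcon
      push_neg at hcon
      obtain ⟨τ0, hτ0, hτ0'⟩ := hcon
      set S : Set ℝ := Set.Icc s t ∩ (fun τ => h τ - φ τ) ⁻¹' (Set.Ici 0) with hS_def
      have hS_closed : IsClosed S :=
        ContinuousOn.preimage_isClosed_of_isClosed
          (hh_cont.sub hφ_cont.continuousOn) isClosed_Icc isClosed_Ici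
      have hS_cpt : IsCompact S :=
        isCompact_Icc.of_isClosed_subset hS_closed Set.inter_subset_left
      have hS_ne : S.Nonempty := ⟨τ0, hτ0, by simp [Set.mem_preimage]; linarith⟩
      obtain ⟨τs, ⟨hτs_mem, hτs_ge⟩, hτs_ub⟩ := hS_cpt.exists_isGreatest hS_ne
      have hτs_ge' : φ τs ≤ h τs := by
        have := hτs_ge; simp only [Set.mem_preimage, Set.mem_Ici] at this; linarith
      have hτs_lt_t : τs < t := by
        rcases lt_or_eq_of_le hτs_mem.2 with h' | h'
        · exact h'
        · exfalso; rw [h'] at hτs_ge'; rw [hh_t, hφ_t] at hτs_ge'; linarith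
      -- on (τs, t), h < φ hence y < φ
      have hyφ : ∀ σ ∈ Set.Ioo τs t, y σ ≤ φ σ ∧ 0 < y σ ∧ y σ < 1 := by
        intro σ hσ
        have hσ_mem : σ ∈ Set.Icc s t := ⟨hτs_mem.1.trans hσ.1.le, hσ.2.le⟩
        have hσ_notS : σ ∉ S := fun hin => absurd (hτs_ub hin) (not_le.2 hσ.1)
        have : h σ < φ σ := by
          by_contra hcc
          exact hσ_notS ⟨hσ_mem, by simp [Set.mem_preimage]; linarith⟩
        exact ⟨(hyh σ hσ_mem).trans this.le, (hy σ hσ_mem).1, (hy σ hσ_mem).2⟩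
      -- integral comparison
      have hint_mono : (∫ σ in τs..t, g σ) ≤ ∫ σ in τs..t, m σ := by
        apply intervalIntegral.integral_mono_ae_restrict hτs_lt_t.le
          (hg_int τs hτs_mem t (Set.right_mem_Icc.2 hst)) (hm_cont.intervalIntegrable τs t)
        rw [Filter.EventuallyLE, ae_iff, Measure.restrict_apply' measurableSet_Icc]
        refine measure_mono_null (t := ({τs, t} : Set ℝ)) ?_ ?_
        · intro σ hσ
          obtain ⟨hbad, hmem⟩ := hσ
          by_contra hne
          simp only [Set.mem_insert_iff, Set.mem_singleton_iff, not_or] at hne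
          have hσIoo : σ ∈ Set.Ioo τs t :=
            ⟨lt_of_le_of_ne hmem.1 (Ne.symm hne.1), lt_of_le_of_ne hmem.2 hne.2⟩
          obtain ⟨hyφσ, hy0, hy1⟩ := hyφ σ hσIoo
          have hσI : σ ∈ Set.Icc s t := ⟨hτs_mem.1.trans hσIoo.1.le, hσIoo.2.le⟩
          have : g σ ≤ m σ :=
            mu_mono ⟨hy0, hy1.le⟩ ⟨hφ_pos σ, hφ_le_one σ hσI⟩ hyφσ
          exact hbad (by simpa using this)
        · exact ((Set.finite_singleton t).insert τs).measure_zero volume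
      have : φ τs ≤ h τs := hτs_ge'
      have hcontra : h τs ≤ φ τs - ε := by
        have h1 : h τs ≤ δ + C * ∫ σ in τs..t, m σ := by
          simp only [hh_def]
          have := mul_le_mul_of_nonneg_left hint_mono hC.le
          linarith
        rw [hFTC τs] at h1
        linarith
      linarith
    have := main s hs_mem
    exact ((hyh s hs_mem).trans this.le).trans (le_refl _)
  -- take the limit ε → 0⁺
  have hBs : -C * (t - s) = C * (s - t) := by ring
  rw [hBs]
  set B : ℝ := Real.exp (C * (s - t)) with hB_def
  have hB_pos : 0 < B := Real.exp_pos _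
  have hRHS : Real.exp (2 - 2 * B) * δ ^ B = Real.exp (2 - (2 - Real.log δ) * B) := by
    rw [Real.rpow_def_of_pos hδ0, ← Real.exp_add]
    ring_nf
  rw [hRHS]
  set F : ℝ → ℝ := fun ε => Real.exp (2 - (2 - Real.log (δ + ε)) * B) with hF_def
  have hF0 : F 0 = Real.exp (2 - (2 - Real.log δ) * B) := by simp [hF_def]
  by_cases hcase : 1 ≤ Real.exp (2 - (2 - Real.log δ) * B)
  · exact le_trans (hy s hs_mem).2.le hcase
  · push_neg at hcase
    have hF_cont : ContinuousAt F 0 := by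
      apply Real.continuous_exp.continuousAt.comp
      apply ContinuousAt.sub continuousAt_const
      apply ContinuousAt.mul _ continuousAt_const
      apply ContinuousAt.sub continuousAt_const
      exact (Real.continuousAt_log (by simp; positivity)).comp (by fun_prop)
    have htend : Filter.Tendsto F (nhdsWithin 0 (Set.Ioi 0)) (nhds (F 0)) :=
      hF_cont.continuousWithinAt.tendsto
    rw [← hF0]
    apply ge_of_tendsto htend
    have hev1 : ∀ᶠ ε in nhdsWithin 0 (Set.Ioi 0), F ε < 1 := by
      have hmem : ∀ᶠ x in nhds (F 0), x ∈ Set.Iio (1:ℝ) :=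
        isOpen_Iio.eventually_mem (show F 0 ∈ Set.Iio (1:ℝ) from hF0 ▸ hcase)
      exact htend.eventually hmem
    have hev2 : ∀ᶠ ε in nhdsWithin 0 (Set.Ioi 0), ε ∈ Set.Ioo (0:ℝ) (1 - δ) :=
      Filter.eventually_of_mem (Ioo_mem_nhdsGT_of_mem ⟨le_refl 0, by linarith⟩) (fun x hx => hx)
    filter_upwards [hev1, hev2] with ε hε1 hε2
    exact key ε hε2.1 (by linarith [hε2.2]) hε1.le
end
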